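/- Let A, B ∈ M_n(ℂ). There exists a constant C ≥ 0 such that for all t ∈ [0,1], ‖ exp(it(A+B)) − exp(itA/2) · exp(itB) · exp(itA/2) · exp( −i (t³/24) [A + 2B, [A,B]] ) ‖ ≤ C t⁴. -/

import Mathlib

open scoped Matrix.Norms.L2Operator
open Matrix

set_option maxHeartbeats 1000000
namespace Stmt8Aux
variable {𝔸 : Type*} [NormedRing 𝔸] [NormedAlgebra ℂ 𝔸] [CompleteSpace 𝔸]

def expoly (a b c d : 𝔸) (z : ℂ) : 𝔸 := a + z • b + z ^ 2 • c + z ^ 3 • d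

def approx (f : ℂ → 𝔸) (a b c d : 𝔸) : Prop :=
  ∃ K : ℝ, 0 ≤ K ∧ ∀ z : ℂ, ‖z‖ ≤ 1 → ‖f z - expoly a b c d z‖ ≤ K * ‖z‖ ^ 4

lemma norm_expoly_le (a b c d : 𝔸) {z : ℂ} (hz : ‖z‖ ≤ 1) :
    ‖expoly a b c d z‖ ≤ ‖a‖ + ‖b‖ + ‖c‖ + ‖d‖ := by
  have h0 : (0:ℝ) ≤ ‖z‖ := norm_nonneg _
  have hp : ∀ k : ℕ, ‖z ^ k‖ ≤ 1 := fun k => by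
    rw [norm_pow]; exact pow_le_one₀ h0 hz
  calc ‖expoly a b c d z‖
      ≤ ‖a + z • b + z ^ 2 • c‖ + ‖z ^ 3 • d‖ := norm_add_le _ _
    _ ≤ (‖a + z • b‖ + ‖z ^ 2 • c‖) + ‖z ^ 3 • d‖ := by
        gcongr; exact norm_add_le _ _
    _ ≤ ((‖a‖ + ‖z • b‖) + ‖z ^ 2 • c‖) + ‖z ^ 3 • d‖ := by
        gcongr; exact norm_add_le _ _
    _ ≤ ‖a‖ + ‖b‖ + ‖c‖ + ‖d‖ := by
        rw [norm_smul, norm_smul, norm_smul]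
        nlinarith [hp 1, hp 2, hp 3, norm_nonneg b, norm_nonneg c, norm_nonneg d,
          norm_pow z 1, norm_nonneg (z^2), norm_nonneg (z^3),
          mul_le_mul_of_nonneg_right (hp 1) (norm_nonneg b),
          mul_le_mul_of_nonneg_right (hp 2) (norm_nonneg c),
          mul_le_mul_of_nonneg_right (hp 3) (norm_nonneg d),
          mul_le_mul_of_nonneg_right hz (norm_nonneg b)]

lemma exp_tail (X : 𝔸) (m : ℕ) (hm : m ≠ 0) {z : ℂ} (hz : ‖z‖ ≤ 1) :
    ‖NormedSpace.exp (z • X) -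
        ∑ k ∈ Finset.range m, (z ^ k * ((k.factorial : ℂ))⁻¹) • X ^ k‖
      ≤ Real.exp ‖X‖ * ‖z‖ ^ m := by
  have h0 : (0:ℝ) ≤ ‖z‖ := norm_nonneg _
  set a : ℕ → 𝔸 := fun n => (z ^ n * ((n.factorial : ℂ))⁻¹) • X ^ n with ha
  have hae : (fun n => ((n.factorial : ℂ))⁻¹ • (z • X) ^ n) = a := by
    funext n
    rw [ha]
    simp only [smul_pow, smul_smul, mul_comm]
  have hsum : HasSum a (NormedSpace.exp (z • X)) := by
    rw [← hae]; exact NormedSpace.exp_series_hasSum_exp' (z • X)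
  have hsa : Summable a := hsum.summable
  have hnorm : Summable fun n => ‖a n‖ := by
    rw [← hae]; exact NormedSpace.norm_expSeries_summable' (z • X)
  have hsplit : NormedSpace.exp (z • X) - ∑ k ∈ Finset.range m, a k = ∑' n, a (n + m) := by
    have h := Summable.sum_add_tsum_nat_add (f := a) m hsa
    rw [hsum.tsum_eq] at h
    rw [← h]; abel
  rw [hsplit]
  have hreal : Summable fun n : ℕ => ‖X‖ ^ n / n.factorial :=
    Real.summable_pow_div_factorial ‖X‖
  have hreal' : Summable fun n : ℕ => ‖X‖ ^ (n + m) / (n + m).factorial :=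
    (summable_nat_add_iff m).2 hreal
  have hnorm' : Summable fun n => ‖a (n + m)‖ := (summable_nat_add_iff m).2 hnorm
  have hb : ∀ n : ℕ, ‖a (n + m)‖ ≤ ‖z‖ ^ m * (‖X‖ ^ (n + m) / (n + m).factorial) := by
    intro n
    rw [ha]
    simp only
    rw [norm_smul, norm_mul, norm_pow]
    have h1 : ‖(((n+m).factorial : ℂ))⁻¹‖ = ((n+m).factorial : ℝ)⁻¹ := by
      rw [norm_inv]; norm_cast
    rw [h1]
    have h2 : ‖X ^ (n+m)‖ ≤ ‖X‖ ^ (n+m) :=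
      norm_pow_le' _ (Nat.pos_of_ne_zero (by omega))
    have h3 : ‖z‖ ^ (n+m) ≤ ‖z‖ ^ m :=
      pow_le_pow_of_le_one h0 hz (Nat.le_add_left m n)
    have hf : (0:ℝ) < (n+m).factorial := by positivity
    calc ‖z‖ ^ (n+m) * (((n+m).factorial : ℝ))⁻¹ * ‖X ^ (n+m)‖
        ≤ ‖z‖ ^ m * (((n+m).factorial : ℝ))⁻¹ * ‖X‖ ^ (n+m) := by
          apply mul_le_mul (mul_le_mul_of_nonneg_right h3 (by positivity)) h2
            (norm_nonneg _) (by positivity)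
      _ = ‖z‖ ^ m * (‖X‖ ^ (n + m) / (n + m).factorial) := by ring
  have htail : (∑' n : ℕ, ‖X‖ ^ (n + m) / (n + m).factorial) ≤ Real.exp ‖X‖ := by
    have h := Summable.sum_add_tsum_nat_add (f := fun n : ℕ => ‖X‖ ^ n / n.factorial) m hreal
    have hexp : Real.exp ‖X‖ = ∑' n : ℕ, ‖X‖ ^ n / n.factorial := by
      rw [Real.exp_eq_exp_ℝ, NormedSpace.exp_eq_tsum_div]
    have hpos : (0:ℝ) ≤ ∑ k ∈ Finset.range m, ‖X‖ ^ k / k.factorial := by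
      apply Finset.sum_nonneg; intro i _; positivity
    rw [hexp, ← h]
    linarith
  calc ‖∑' n, a (n + m)‖
      ≤ ∑' n, ‖a (n + m)‖ := norm_tsum_le_tsum_norm hnorm'
    _ ≤ ∑' n, ‖z‖ ^ m * (‖X‖ ^ (n + m) / (n + m).factorial) :=
        Summable.tsum_le_tsum hb hnorm' (hreal'.mul_left _)
    _ = ‖z‖ ^ m * ∑' n, ‖X‖ ^ (n + m) / (n + m).factorial := tsum_mul_left
    _ ≤ ‖z‖ ^ m * Real.exp ‖X‖ := by
        apply mul_le_mul_of_nonneg_left htail (by positivity)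
    _ = Real.exp ‖X‖ * ‖z‖ ^ m := mul_comm _ _

end Stmt8Aux

namespace Stmt8Aux2
open Stmt8Aux
variable {𝔸 : Type*} [NormedRing 𝔸] [NormedAlgebra ℂ 𝔸] [CompleteSpace 𝔸]

lemma approx_exp (X : 𝔸) :
    approx (fun z => NormedSpace.exp (z • X)) 1 X ((2:ℂ)⁻¹ • (X * X)) ((6:ℂ)⁻¹ • (X * X * X)) := by
  refine ⟨Real.exp ‖X‖, (Real.exp_pos _).le, fun z hz => ?_⟩
  have h := exp_tail X 4 (by norm_num) hz
  have hs : (∑ k ∈ Finset.range 4, (z ^ k * ((k.factorial : ℂ))⁻¹) • X ^ k)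
      = expoly 1 X ((2:ℂ)⁻¹ • (X * X)) ((6:ℂ)⁻¹ • (X * X * X)) z := by
    simp only [Finset.sum_range_succ, Finset.sum_range_zero, expoly, pow_succ, pow_zero,
      Nat.factorial, smul_smul]
    norm_num
  rw [← hs]
  exact h

lemma approx_exp_cube (W : 𝔸) :
    approx (fun z => NormedSpace.exp ((z ^ 3) • W)) 1 0 0 W := by
  refine ⟨Real.exp ‖W‖, (Real.exp_pos _).le, fun z hz => ?_⟩
  have hz3 : ‖z ^ 3‖ ≤ 1 := by rw [norm_pow]; exact pow_le_one₀ (norm_nonneg _) hz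
  have h := exp_tail W 2 (by norm_num) hz3
  have hs : (∑ k ∈ Finset.range 2, ((z ^ 3) ^ k * ((k.factorial : ℂ))⁻¹) • W ^ k)
      = expoly 1 0 0 W z := by
    simp only [Finset.sum_range_succ, Finset.sum_range_zero, expoly, pow_succ, pow_zero,
      Nat.factorial, smul_smul]
    norm_num
  rw [hs] at h
  calc ‖NormedSpace.exp ((z ^ 3) • W) - expoly 1 0 0 W z‖
      ≤ Real.exp ‖W‖ * ‖z ^ 3‖ ^ 2 := h
    _ ≤ Real.exp ‖W‖ * ‖z‖ ^ 4 := by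
        rw [norm_pow, ← pow_mul]
        apply mul_le_mul_of_nonneg_left _ (Real.exp_pos _).le
        exact pow_le_pow_of_le_one (norm_nonneg _) hz (by norm_num)

lemma expoly_mul (a b c d a' b' c' d' : 𝔸) (z : ℂ) :
    expoly a b c d z * expoly a' b' c' d' z
      = expoly (a*a') (a*b' + b*a') (a*c' + b*b' + c*a') (a*d' + b*c' + c*b' + d*a') z
        + z ^ 4 • ((b*d' + c*c' + d*b') + z • (c*d' + d*c') + z ^ 2 • (d*d')) := by
  simp only [expoly, mul_add, add_mul, smul_mul_assoc, mul_smul_comm, smul_smul, smul_add]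
  module

end Stmt8Aux2

namespace Stmt8Aux3
open Stmt8Aux Stmt8Aux2
variable {𝔸 : Type*} [NormedRing 𝔸] [NormedAlgebra ℂ 𝔸] [CompleteSpace 𝔸]

lemma approx_mul {f g : ℂ → 𝔸} {a b c d a' b' c' d' : 𝔸}
    (hf : approx f a b c d) (hg : approx g a' b' c' d') :
    approx (fun z => f z * g z) (a*a') (a*b' + b*a') (a*c' + b*b' + c*a')
      (a*d' + b*c' + c*b' + d*a') := by
  obtain ⟨K₁, hK₁, h₁⟩ := hf
  obtain ⟨K₂, hK₂, h₂⟩ := hg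
  set Mf : ℝ := ‖a‖ + ‖b‖ + ‖c‖ + ‖d‖ with hMf
  set Mg : ℝ := ‖a'‖ + ‖b'‖ + ‖c'‖ + ‖d'‖ with hMg
  have hMf0 : 0 ≤ Mf := by positivity
  have hMg0 : 0 ≤ Mg := by positivity
  set L : ℝ := ‖b*d' + c*c' + d*b'‖ + ‖c*d' + d*c'‖ + ‖d*d'‖ with hL
  have hL0 : 0 ≤ L := by positivity
  refine ⟨K₁ * (Mg + K₂) + Mf * K₂ + L,
    by positivity, fun z hz => ?_⟩
  have h0 : (0:ℝ) ≤ ‖z‖ := norm_nonneg _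
  have hz4 : ‖z‖ ^ 4 ≤ 1 := pow_le_one₀ h0 hz
  have hPf : ‖expoly a b c d z‖ ≤ Mf := norm_expoly_le a b c d hz
  have hPg : ‖expoly a' b' c' d' z‖ ≤ Mg := norm_expoly_le a' b' c' d' hz
  have hgz : ‖g z‖ ≤ Mg + K₂ := by
    calc ‖g z‖ = ‖expoly a' b' c' d' z + (g z - expoly a' b' c' d' z)‖ := by congr 1; abel
      _ ≤ ‖expoly a' b' c' d' z‖ + ‖g z - expoly a' b' c' d' z‖ := norm_add_le _ _
      _ ≤ Mg + K₂ * ‖z‖ ^ 4 := add_le_add hPg (h₂ z hz)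
      _ ≤ Mg + K₂ := by nlinarith
  set S : 𝔸 := (b*d' + c*c' + d*b') + z • (c*d' + d*c') + z ^ 2 • (d*d') with hS
  have hSnorm : ‖S‖ ≤ L := by
    rw [hS, hL]
    have hp : ∀ k : ℕ, ‖z ^ k‖ ≤ 1 := fun k => by
      rw [norm_pow]; exact pow_le_one₀ h0 hz
    calc ‖(b*d' + c*c' + d*b') + z • (c*d' + d*c') + z ^ 2 • (d*d')‖
        ≤ ‖(b*d' + c*c' + d*b') + z • (c*d' + d*c')‖ + ‖z ^ 2 • (d*d')‖ := norm_add_le _ _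
      _ ≤ (‖b*d' + c*c' + d*b'‖ + ‖z • (c*d' + d*c')‖) + ‖z ^ 2 • (d*d')‖ := by
          gcongr; exact norm_add_le _ _
      _ ≤ ‖b*d' + c*c' + d*b'‖ + ‖c*d' + d*c'‖ + ‖d*d'‖ := by
          rw [norm_smul, norm_smul]
          nlinarith [hp 2, norm_nonneg (c*d' + d*c'), norm_nonneg (d*d'),
            mul_le_mul_of_nonneg_right hz (norm_nonneg (c*d' + d*c')),
            mul_le_mul_of_nonneg_right (hp 2) (norm_nonneg (d*d'))]
  have key : f z * g z
      - expoly (a*a') (a*b' + b*a') (a*c' + b*b' + c*a') (a*d' + b*c' + c*b' + d*a') z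
      = (f z - expoly a b c d z) * g z + expoly a b c d z * (g z - expoly a' b' c' d' z)
        + (z ^ 4 • S) := by
    have hm := expoly_mul a b c d a' b' c' d' z
    rw [sub_mul, mul_sub, hS]
    rw [hm]
    abel
  rw [key]
  have t1 : ‖(f z - expoly a b c d z) * g z‖ ≤ (K₁ * ‖z‖ ^ 4) * (Mg + K₂) := by
    calc ‖(f z - expoly a b c d z) * g z‖ ≤ ‖f z - expoly a b c d z‖ * ‖g z‖ := norm_mul_le _ _
      _ ≤ (K₁ * ‖z‖ ^ 4) * (Mg + K₂) := by
          apply mul_le_mul (h₁ z hz) hgz (norm_nonneg _) (by positivity)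
  have t2 : ‖expoly a b c d z * (g z - expoly a' b' c' d' z)‖ ≤ Mf * (K₂ * ‖z‖ ^ 4) := by
    calc ‖expoly a b c d z * (g z - expoly a' b' c' d' z)‖
        ≤ ‖expoly a b c d z‖ * ‖g z - expoly a' b' c' d' z‖ := norm_mul_le _ _
      _ ≤ Mf * (K₂ * ‖z‖ ^ 4) := mul_le_mul hPf (h₂ z hz) (norm_nonneg _) hMf0
  have t3 : ‖z ^ 4 • S‖ ≤ L * ‖z‖ ^ 4 := by
    rw [norm_smul, norm_pow]
    calc ‖z‖ ^ 4 * ‖S‖ ≤ ‖z‖ ^ 4 * L := by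
          apply mul_le_mul_of_nonneg_left hSnorm (by positivity)
      _ = L * ‖z‖ ^ 4 := mul_comm _ _
  calc ‖(f z - expoly a b c d z) * g z + expoly a b c d z * (g z - expoly a' b' c' d' z)
        + (z ^ 4 • S)‖
      ≤ ‖(f z - expoly a b c d z) * g z + expoly a b c d z * (g z - expoly a' b' c' d' z)‖
        + ‖(z ^ 4 • S)‖ := norm_add_le _ _
    _ ≤ (‖(f z - expoly a b c d z) * g z‖ + ‖expoly a b c d z * (g z - expoly a' b' c' d' z)‖)
        + ‖(z ^ 4 • S)‖ := by gcongr; exact norm_add_le _ _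
    _ ≤ (K₁ * ‖z‖ ^ 4) * (Mg + K₂) + Mf * (K₂ * ‖z‖ ^ 4) + L * ‖z‖ ^ 4 :=
        add_le_add (add_le_add t1 t2) t3
    _ = (K₁ * (Mg + K₂) + Mf * K₂ + L) * ‖z‖ ^ 4 := by ring

lemma approx_congr {f : ℂ → 𝔸} {a b c d a' b' c' d' : 𝔸}
    (h : approx f a b c d) (h1 : a = a') (h2 : b = b') (h3 : c = c') (h4 : d = d') :
    approx f a' b' c' d' := by subst h1 h2 h3 h4; exact h

lemma approx_close {f g : ℂ → 𝔸} {a b c d : 𝔸}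
    (hf : approx f a b c d) (hg : approx g a b c d) :
    ∃ C : ℝ, 0 ≤ C ∧ ∀ z : ℂ, ‖z‖ ≤ 1 → ‖f z - g z‖ ≤ C * ‖z‖ ^ 4 := by
  obtain ⟨K₁, hK₁, h₁⟩ := hf
  obtain ⟨K₂, hK₂, h₂⟩ := hg
  refine ⟨K₁ + K₂, by positivity, fun z hz => ?_⟩
  calc ‖f z - g z‖ = ‖(f z - expoly a b c d z) - (g z - expoly a b c d z)‖ := by congr 1; abel
    _ ≤ ‖f z - expoly a b c d z‖ + ‖g z - expoly a b c d z‖ := norm_sub_le _ _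
    _ ≤ K₁ * ‖z‖ ^ 4 + K₂ * ‖z‖ ^ 4 := add_le_add (h₁ z hz) (h₂ z hz)
    _ = (K₁ + K₂) * ‖z‖ ^ 4 := by ring

end Stmt8Aux3

open Stmt8Aux Stmt8Aux2 Stmt8Aux3 in
/-- the second-order (Strang) splitting corrected by the leading error
exponential approximates `exp(it(A+B))` with error `O(t⁴)`. -/
theorem stmt8 {n : ℕ} (A B : Matrix (Fin n) (Fin n) ℂ) :
    ∃ C : ℝ, 0 ≤ C ∧ ∀ t ∈ Set.Icc (0:ℝ) 1,
      ‖NormedSpace.exp ((Complex.I * (t : ℂ)) • (A + B)) -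
          NormedSpace.exp ((Complex.I * (t : ℂ) / 2) • A) *
          NormedSpace.exp ((Complex.I * (t : ℂ)) • B) *
          NormedSpace.exp ((Complex.I * (t : ℂ) / 2) • A) *
          NormedSpace.exp
            ((-(Complex.I * (t : ℂ) ^ 3 / 24)) •
              ((A + 2 • B) * (A * B - B * A) - (A * B - B * A) * (A + 2 • B)))‖
        ≤ C * t ^ 4 := by
  have hI3 : Complex.I ^ 3 = -Complex.I := by
    rw [pow_succ, Complex.I_sq]; ring
  set X := Complex.I • (A + B) with hX
  set X₁ := (Complex.I / 2) • A with hX1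
  set X₂ := Complex.I • B with hX2
  set W0 := (A + 2 • B) * (A * B - B * A) - (A * B - B * A) * (A + 2 • B) with hW0
  set Wc := (Complex.I ^ 3 / 24) • W0 with hWc
  have hE : approx (fun z : ℂ => NormedSpace.exp (z • X)) 1 X
      ((2:ℂ)⁻¹ • (X * X)) ((6:ℂ)⁻¹ • (X * X * X)) := approx_exp X
  have hP := approx_mul (approx_mul (approx_mul (approx_exp X₁) (approx_exp X₂))
      (approx_exp X₁)) (approx_exp_cube Wc)
  have hP' : approx (fun z : ℂ => NormedSpace.exp (z • X₁) * NormedSpace.exp (z • X₂) *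
      NormedSpace.exp (z • X₁) * NormedSpace.exp ((z ^ 3) • Wc)) 1 X
      ((2:ℂ)⁻¹ • (X * X)) ((6:ℂ)⁻¹ • (X * X * X)) := by
    refine approx_congr hP ?_ ?_ ?_ ?_
    · simp
    · rw [hX, hX1, hX2]
      simp only [smul_mul_assoc, mul_smul_comm, smul_smul, mul_add, add_mul, smul_add,
        sub_mul, mul_sub, smul_sub, mul_one, one_mul, mul_zero, zero_mul, add_zero, zero_add, smul_zero, two_smul, ← mul_assoc]
      module
    · rw [hX, hX1, hX2]
      simp only [smul_mul_assoc, mul_smul_comm, smul_smul, mul_add, add_mul, smul_add,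
        sub_mul, mul_sub, smul_sub, mul_one, one_mul, mul_zero, zero_mul, add_zero, zero_add, smul_zero, two_smul, ← mul_assoc]
      module
    · rw [hX, hX1, hX2, hWc, hW0]
      simp only [smul_mul_assoc, mul_smul_comm, smul_smul, mul_add, add_mul, smul_add,
        sub_mul, mul_sub, smul_sub, mul_one, one_mul, mul_zero, zero_mul, add_zero, zero_add, smul_zero, two_smul, ← mul_assoc]
      module
  obtain ⟨C, hC0, hC⟩ := approx_close hE hP'
  refine ⟨C, hC0, fun t ht => ?_⟩
  obtain ⟨ht0, ht1⟩ := ht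
  have hz : ‖(t:ℂ)‖ ≤ 1 := by
    rw [Complex.norm_real, Real.norm_eq_abs, abs_of_nonneg ht0]; exact ht1
  have h4 : ‖(t:ℂ)‖ ^ 4 = t ^ 4 := by
    rw [Complex.norm_real, Real.norm_eq_abs, abs_of_nonneg ht0]
  have hA : (Complex.I * (t:ℂ)) • (A + B) = (t:ℂ) • X := by
    rw [hX, mul_comm, mul_smul]
  have hA1 : (Complex.I * (t:ℂ) / 2) • A = (t:ℂ) • X₁ := by
    rw [hX1, show Complex.I * (t:ℂ) / 2 = (t:ℂ) * (Complex.I / 2) by ring, mul_smul]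
  have hB : (Complex.I * (t:ℂ)) • B = (t:ℂ) • X₂ := by
    rw [hX2, mul_comm, mul_smul]
  have hW : (-(Complex.I * (t : ℂ) ^ 3 / 24)) • W0 = ((t:ℂ) ^ 3) • Wc := by
    rw [hWc, show -(Complex.I * (t : ℂ) ^ 3 / 24) = (t:ℂ) ^ 3 * (Complex.I ^ 3 / 24) by
      rw [hI3]; ring, mul_smul]
  rw [hA, hA1, hB, hW, ← h4]
  exact hC (t:ℂ) hz
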